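/- Let V and Q be finite-dimensional real inner product spaces, let m be a symmetric positive definite bilinear form on V with associated norm ‖v‖_m = m(v,v)^{1/2}, let D : V → Q be a linear map, and define the symmetric positive definite bilinear form s on V by s(v, w) = m(v, w) + ⟨D v, D w⟩. Let a be a symmetric positive semidefinite bilinear form on V. Let V_H ⊆ V and Q_H ⊆ Q be subspaces, let Ψ_1, …, Ψ_J ∈ V be pairwise s-orthogonal nonzero vectors satisfying a(Ψ_k, w) = λ_k s(Ψ_k, w) for all w ∈ V with 0 < λ_1 ≤ ⋯ ≤ λ_J, let c_1, …, c_J be real numbers, let û = Σ_{k=1}^J c_k Ψ_k, and for some l < J let û_off = Σ_{k=1}^l c_k Ψ_k and assume û_off ∈ V_H. Suppose u ∈ V, u_H ∈ V_H, and p′, p_H ∈ Q with p′ − p_H ∈ Q_H satisfy: (i) m(u − u_H, w) = ⟨D w, p′ − p_H⟩ for all w ∈ V_H; (ii) ⟨D(u − u_H), q⟩ = 0 for all q ∈ Q_H; (iii) ⟨D(u − û), q⟩ = 0 for all q ∈ Q_H; and (iv) the inf-sup condition with constant C₀ > 0: ‖q‖_Q ≤ C₀ · sup over nonzero w ∈ V_H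 of ⟨D w, q⟩ / (m(w,w) + ‖D w‖_Q²)^{1/2}, for all q ∈ Q_H. Then ‖u − u_H‖_m ≤ ‖u − û‖_m + (1 + C₀) λ_{l+1}^{-1/2} a(û, û)^{1/2}. -/

import Mathlib

open RealInnerProductSpace

section Aux
variable {V : Type*} [AddCommGroup V] [Module ℝ V]

/-- Cauchy–Schwarz for a symmetric nonnegative bilinear form. -/
lemma bilin_cauchy_schwarz (b : V →ₗ[ℝ] V →ₗ[ℝ] ℝ)
    (hs : ∀ v w, b v w = b w v) (hnn : ∀ v, 0 ≤ b v v) (v w : V) :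
    b v w ^ 2 ≤ b v v * b w w := by
  have h : ∀ x : ℝ, 0 ≤ b w w * (x * x) + (2 * b v w) * x + b v v := by
    intro x
    have := hnn (v + x • w)
    simp only [map_add, map_smul, LinearMap.add_apply, LinearMap.smul_apply,
      smul_eq_mul] at this
    rw [hs w v] at this
    nlinarith
  have hd := discrim_le_zero h
  unfold discrim at hd
  nlinarith

lemma bilin_apply_le (b : V →ₗ[ℝ] V →ₗ[ℝ] ℝ)
    (hs : ∀ v w, b v w = b w v) (hnn : ∀ v, 0 ≤ b v v) (v w : V) :
    b v w ≤ Real.sqrt (b v v) * Real.sqrt (b w w) := by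
  calc b v w ≤ |b v w| := le_abs_self _
    _ = Real.sqrt ((b v w) ^ 2) := (Real.sqrt_sq_eq_abs _).symm
    _ ≤ Real.sqrt (b v v * b w w) :=
        Real.sqrt_le_sqrt (bilin_cauchy_schwarz b hs hnn v w)
    _ = _ := Real.sqrt_mul (hnn v) _

lemma bilin_triangle (b : V →ₗ[ℝ] V →ₗ[ℝ] ℝ)
    (hs : ∀ v w, b v w = b w v) (hnn : ∀ v, 0 ≤ b v v) (v w : V) :
    Real.sqrt (b (v + w) (v + w)) ≤ Real.sqrt (b v v) + Real.sqrt (b w w) := by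
  have hcs := bilin_apply_le b hs hnn v w
  have hexp : b (v + w) (v + w) = b v v + 2 * b v w + b w w := by
    simp only [map_add, LinearMap.add_apply]
    nlinarith [hs w v]
  have h1 : b (v + w) (v + w) ≤ (Real.sqrt (b v v) + Real.sqrt (b w w)) ^ 2 := by
    rw [hexp]
    have e1 : Real.sqrt (b v v) ^ 2 = b v v := Real.sq_sqrt (hnn v)
    have e2 : Real.sqrt (b w w) ^ 2 = b w w := Real.sq_sqrt (hnn w)
    nlinarith
  calc Real.sqrt (b (v + w) (v + w))
      ≤ Real.sqrt ((Real.sqrt (b v v) + Real.sqrt (b w w)) ^ 2) :=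
        Real.sqrt_le_sqrt h1
    _ = Real.sqrt (b v v) + Real.sqrt (b w w) :=
        Real.sqrt_sq (by positivity)

lemma bilin_diag_sum (b : V →ₗ[ℝ] V →ₗ[ℝ] ℝ) {J : ℕ} (Ψ : Fin J → V)
    (c : Fin J → ℝ) (h0 : ∀ j k : Fin J, j ≠ k → b (Ψ j) (Ψ k) = 0)
    (F : Finset (Fin J)) :
    b (∑ k ∈ F, c k • Ψ k) (∑ k ∈ F, c k • Ψ k)
      = ∑ k ∈ F, c k ^ 2 * b (Ψ k) (Ψ k) := by
  simp only [map_sum, map_smul, LinearMap.sum_apply, LinearMap.smul_apply,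
    smul_eq_mul]
  refine Finset.sum_congr rfl fun j hj => ?_
  rw [Finset.sum_eq_single j]
  · ring
  · intro k hk hkj
    rw [h0 k j hkj]
    ring
  · intro hj'; exact absurd hj hj'
end Aux

/-- Abstract single-patch form of Theorem 4.3, the main convergence theorem for
the mixed GMsFEM: with the spectral inner product `s(v, w) = m(v, w) + ⟪Dv, Dw⟫`,
the error between the fine-grid velocity `u` and the coarse GMsFEM velocity `uH`
is bounded by the snapshot projection error plus a term decaying as
`λ_{l+1}^{-1/2}`. -/
theorem mixed_gmsfem_convergence
    {V Q : Type*}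
    [NormedAddCommGroup V] [InnerProductSpace ℝ V] [FiniteDimensional ℝ V]
    [NormedAddCommGroup Q] [InnerProductSpace ℝ Q] [FiniteDimensional ℝ Q]
    (m : V →ₗ[ℝ] V →ₗ[ℝ] ℝ)
    (hm_symm : ∀ v w : V, m v w = m w v)
    (hm_pos : ∀ v : V, v ≠ 0 → 0 < m v v)
    (D : V →ₗ[ℝ] Q)
    (a : V →ₗ[ℝ] V →ₗ[ℝ] ℝ)
    (ha_symm : ∀ v w : V, a v w = a w v)
    (ha_nonneg : ∀ v : V, 0 ≤ a v v)
    (VH : Submodule ℝ V) (QH : Submodule ℝ Q)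
    {J : ℕ} (Ψ : Fin J → V)
    (hne : ∀ k : Fin J, Ψ k ≠ 0)
    (horth : ∀ j k : Fin J, j ≠ k →
      m (Ψ j) (Ψ k) + ⟪D (Ψ j), D (Ψ k)⟫ = 0)
    (lam : Fin J → ℝ)
    (hpos : ∀ k : Fin J, 0 < lam k)
    (hmono : Monotone lam)
    (heig : ∀ k : Fin J, ∀ w : V,
      a (Ψ k) w = lam k * (m (Ψ k) w + ⟪D (Ψ k), D w⟫))
    (c : Fin J → ℝ) (l : ℕ) (hl : l < J)
    (uhat uoff : V)
    (huhat : uhat = ∑ k : Fin J, c k • Ψ k)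
    (huoffdef : uoff =
      ∑ k ∈ Finset.univ.filter (fun k : Fin J => (k : ℕ) < l), c k • Ψ k)
    (huoff : uoff ∈ VH)
    (u uH : V) (huH : uH ∈ VH)
    (p' pH : Q) (hp : p' - pH ∈ QH)
    (h1 : ∀ w ∈ VH, m (u - uH) w = ⟪D w, p' - pH⟫)
    (h2 : ∀ q ∈ QH, ⟪D (u - uH), q⟫ = 0)
    (h3 : ∀ q ∈ QH, ⟪D (u - uhat), q⟫ = 0)
    (C₀ : ℝ) (hC₀ : 0 < C₀)
    (hinfsup : ∀ q ∈ QH, ‖q‖ ≤ C₀ *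
      ⨆ w : {w : V // w ∈ VH ∧ w ≠ 0},
        ⟪D w.1, q⟫ / Real.sqrt (m w.1 w.1 + ‖D w.1‖ ^ 2)) :
    Real.sqrt (m (u - uH) (u - uH))
      ≤ Real.sqrt (m (u - uhat) (u - uhat))
        + (1 + C₀) * (Real.sqrt (lam ⟨l, hl⟩))⁻¹ * Real.sqrt (a uhat uhat) := by
  classical
  -- the spectral bilinear form s
  set S : V →ₗ[ℝ] V →ₗ[ℝ] ℝ := LinearMap.mk₂ ℝ (fun v w => m v w + ⟪D v, D w⟫)
    (fun v v' w => by simp only [map_add, LinearMap.add_apply, inner_add_left]; ring)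
    (fun t v w => by
      simp only [map_smul, LinearMap.smul_apply, inner_smul_left, smul_eq_mul,
        RCLike.conj_to_real]; ring)
    (fun v w w' => by simp only [map_add, inner_add_right]; ring)
    (fun t v w => by
      simp only [map_smul, inner_smul_right, smul_eq_mul]; ring) with hSdef
  have hSapply : ∀ v w : V, S v w = m v w + ⟪D v, D w⟫ := fun v w => rfl
  have hm_nonneg : ∀ v : V, 0 ≤ m v v := by
    intro v
    by_cases h : v = 0
    · simp [h]
    · exact (hm_pos v h).le
  have hS_symm : ∀ v w : V, S v w = S w v := by
    intro v w
    simp only [hSapply, hm_symm v w, real_inner_comm]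
  have hS_nonneg : ∀ v : V, 0 ≤ S v v := by
    intro v
    have := real_inner_self_nonneg (x := D v)
    have := hm_nonneg v
    simp only [hSapply]; linarith
  have hmS : ∀ v : V, m v v ≤ S v v := by
    intro v
    have := real_inner_self_nonneg (x := D v)
    simp only [hSapply]; linarith
  set e : V := u - uH with he
  set E : ℝ := Real.sqrt (m e e) with hE
  set A : ℝ := Real.sqrt (m (u - uhat) (u - uhat)) with hA
  set t : V := uhat - uoff with ht
  set T : ℝ := Real.sqrt (S t t) with hT
  set q : Q := p' - pH with hq
  have hE0 : 0 ≤ E := Real.sqrt_nonneg _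
  have hA0 : 0 ≤ A := Real.sqrt_nonneg _
  have hT0 : 0 ≤ T := Real.sqrt_nonneg _
  -- ‖D t‖ ≤ T
  have hDt : ‖D t‖ ≤ T := by
    rw [hT]
    conv_lhs => rw [← Real.sqrt_sq (norm_nonneg (D t))]
    apply Real.sqrt_le_sqrt
    have := hm_nonneg t
    rw [hSapply, real_inner_self_eq_norm_sq]
    linarith
  -- bound on the pressure error via inf-sup
  have hpress : ‖q‖ ≤ C₀ * E := by
    refine (hinfsup q hp).trans (mul_le_mul_of_nonneg_left ?_ hC₀.le)
    refine Real.iSup_le (fun w => ?_) hE0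
    obtain ⟨w, hwVH, hw0⟩ := w
    have hden : 0 < Real.sqrt (m w w + ‖D w‖ ^ 2) := by
      apply Real.sqrt_pos.mpr
      have h1' := hm_pos w hw0
      have h2' : (0:ℝ) ≤ ‖D w‖ ^ 2 := sq_nonneg _
      linarith
    rw [div_le_iff₀ hden]
    have hnum : ⟪D w, q⟫ = m e w := (h1 w hwVH).symm
    have hSw : m w w + ‖D w‖ ^ 2 = S w w := by
      rw [hSapply, real_inner_self_eq_norm_sq]
    rw [hnum, hSw]
    calc m e w ≤ Real.sqrt (m e e) * Real.sqrt (m w w) :=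
          bilin_apply_le m hm_symm hm_nonneg e w
      _ ≤ E * Real.sqrt (S w w) := by
          rw [hE]
          exact mul_le_mul_of_nonneg_left (Real.sqrt_le_sqrt (hmS w)) hE0
  -- diagonal expansions
  have hS_orth : ∀ j k : Fin J, j ≠ k → S (Ψ j) (Ψ k) = 0 := by
    intro j k hjk; rw [hSapply]; exact horth j k hjk
  have ha_orth : ∀ j k : Fin J, j ≠ k → a (Ψ j) (Ψ k) = 0 := by
    intro j k hjk
    rw [heig j (Ψ k), ← hSapply, hS_orth j k hjk, mul_zero]
  have haexp : a uhat uhat = ∑ k : Fin J, c k ^ 2 * (lam k * S (Ψ k) (Ψ k)) := by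
    rw [huhat, bilin_diag_sum a Ψ c ha_orth Finset.univ]
    refine Finset.sum_congr rfl fun k _ => ?_
    rw [heig k (Ψ k), ← hSapply]
  have htexp : t = ∑ k ∈ Finset.univ.filter (fun k : Fin J => ¬ (k : ℕ) < l),
      c k • Ψ k := by
    rw [ht, huhat, huoffdef, sub_eq_iff_eq_add]
    rw [add_comm, Finset.sum_filter_add_sum_filter_not]
  have hStt : S t t = ∑ k ∈ Finset.univ.filter (fun k : Fin J => ¬ (k : ℕ) < l),
      c k ^ 2 * S (Ψ k) (Ψ k) := by
    rw [htexp]; exact bilin_diag_sum S Ψ c hS_orth _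
  have hSk_nonneg : ∀ k : Fin J, 0 ≤ S (Ψ k) (Ψ k) := fun k => hS_nonneg (Ψ k)
  set laml : ℝ := lam ⟨l, hl⟩ with hlaml
  have hlaml_pos : 0 < laml := hpos _
  -- spectral truncation bound
  have hspec : S t t ≤ laml⁻¹ * a uhat uhat := by
    rw [hStt, haexp, Finset.mul_sum]
    calc ∑ k ∈ Finset.univ.filter (fun k : Fin J => ¬ (k : ℕ) < l),
          c k ^ 2 * S (Ψ k) (Ψ k)
        ≤ ∑ k ∈ Finset.univ.filter (fun k : Fin J => ¬ (k : ℕ) < l),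
          laml⁻¹ * (c k ^ 2 * (lam k * S (Ψ k) (Ψ k))) := by
          refine Finset.sum_le_sum fun k hk => ?_
          simp only [Finset.mem_filter, not_lt] at hk
          have hle : laml ≤ lam k := hmono (Fin.le_def.mpr hk.2)
          have hsk := hSk_nonneg k
          have hck : (0:ℝ) ≤ c k ^ 2 := sq_nonneg _
          rw [← inv_mul_cancel_left₀ hlaml_pos.ne' (c k ^ 2 * S (Ψ k) (Ψ k))]
          apply mul_le_mul_of_nonneg_left _ (inv_nonneg.mpr hlaml_pos.le)
          calc laml * (c k ^ 2 * S (Ψ k) (Ψ k))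
              ≤ lam k * (c k ^ 2 * S (Ψ k) (Ψ k)) :=
                mul_le_mul_of_nonneg_right hle (by positivity)
            _ = c k ^ 2 * (lam k * S (Ψ k) (Ψ k)) := by ring
      _ ≤ ∑ k : Fin J, laml⁻¹ * (c k ^ 2 * (lam k * S (Ψ k) (Ψ k))) := by
          refine Finset.sum_le_sum_of_subset_of_nonneg (Finset.subset_univ _)
            fun k _ _ => ?_
          exact mul_nonneg (inv_nonneg.mpr hlaml_pos.le)
            (mul_nonneg (sq_nonneg _) (mul_nonneg (hpos k).le (hSk_nonneg k)))
  have hTbound : T ≤ (Real.sqrt laml)⁻¹ * Real.sqrt (a uhat uhat) := by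
    rw [hT]
    calc Real.sqrt (S t t) ≤ Real.sqrt (laml⁻¹ * a uhat uhat) :=
          Real.sqrt_le_sqrt hspec
      _ = (Real.sqrt laml)⁻¹ * Real.sqrt (a uhat uhat) := by
          rw [Real.sqrt_mul (inv_nonneg.mpr hlaml_pos.le), Real.sqrt_inv]
  -- main energy estimate
  have hsplit : m e e = m e (u - uoff) + m e (uoff - uH) := by
    have hv : (u - uoff) + (uoff - uH) = e := by rw [he]; abel
    rw [← hv, map_add]
  have hterm2 : m e (uoff - uH) = ⟪D (uoff - uhat), q⟫ := by
    rw [h1 (uoff - uH) (Submodule.sub_mem VH huoff huH)]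
    have hv : uoff - uH = (uoff - uhat) + ((uhat - u) + e) := by rw [he]; abel
    rw [hv, map_add, map_add, inner_add_left, inner_add_left]
    have e1 : ⟪D (uhat - u), q⟫ = 0 := by
      have hneg : uhat - u = -(u - uhat) := by abel
      rw [hneg, map_neg, inner_neg_left, h3 q hp, neg_zero]
    have e2 : ⟪D e, q⟫ = 0 := h2 q hp
    rw [e1, e2]; ring
  have hterm2b : m e (uoff - uH) ≤ T * (C₀ * E) := by
    rw [hterm2]
    calc ⟪D (uoff - uhat), q⟫ ≤ ‖D (uoff - uhat)‖ * ‖q‖ := real_inner_le_norm _ _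
      _ = ‖D t‖ * ‖q‖ := by
          rw [show uoff - uhat = -t from by rw [ht]; abel, map_neg, norm_neg]
      _ ≤ T * (C₀ * E) := mul_le_mul hDt hpress (norm_nonneg _) hT0
  have hterm1 : m e (u - uoff) ≤ E * (A + T) := by
    calc m e (u - uoff)
        ≤ Real.sqrt (m e e) * Real.sqrt (m (u - uoff) (u - uoff)) :=
          bilin_apply_le m hm_symm hm_nonneg _ _
      _ ≤ E * (A + T) := by
          rw [← hE]
          refine mul_le_mul_of_nonneg_left ?_ hE0
          have hv : u - uoff = (u - uhat) + t := by rw [ht]; abel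
          calc Real.sqrt (m (u - uoff) (u - uoff))
              ≤ Real.sqrt (m (u - uhat) (u - uhat)) + Real.sqrt (m t t) := by
                rw [hv]; exact bilin_triangle m hm_symm hm_nonneg _ _
            _ ≤ A + T := by
                rw [← hA, hT]
                exact add_le_add le_rfl (Real.sqrt_le_sqrt (hmS t))
  have hmain : E ^ 2 ≤ E * (A + (1 + C₀) * T) := by
    have hEsq : E ^ 2 = m e e := Real.sq_sqrt (hm_nonneg e)
    rw [hEsq, hsplit]
    have hring : E * (A + T) + T * (C₀ * E) = E * (A + (1 + C₀) * T) := by ring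
    linarith [hterm1, hterm2b]
  have hfinal : E ≤ A + (1 + C₀) * T := by
    rcases eq_or_lt_of_le hE0 with hE0' | hE0'
    · rw [← hE0']
      have h1C : (0:ℝ) ≤ 1 + C₀ := by linarith
      have := mul_nonneg h1C hT0
      linarith
    · have h := hmain
      rw [sq] at h
      exact le_of_mul_le_mul_left h hE0'
  calc E ≤ A + (1 + C₀) * T := hfinal
    _ ≤ A + (1 + C₀) * ((Real.sqrt laml)⁻¹ * Real.sqrt (a uhat uhat)) := by
        have h1C : (0:ℝ) ≤ 1 + C₀ := by linarith
        exact add_le_add le_rfl (mul_le_mul_of_nonneg_left hTbound h1C)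
    _ = A + (1 + C₀) * (Real.sqrt laml)⁻¹ * Real.sqrt (a uhat uhat) := by ring
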